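/- Let τ : ℝ → ℝ be continuous with τ(x) > 0 for all x, let w∞ : ℝ → ℝ be continuous, and let x : [t0, ∞) → ℝ be continuous and T-periodic. Consider q' = −q/τ(x(t)) + w∞(x(t))/τ(x(t)). Then there is a unique initial condition q0 = (1 − e^{−∫_{t0}^{t0+T} dt/τ(x(t))})^{−1} · ∫_{t0}^{t0+T} e^{−∫_{z}^{t0+T} ds/τ(x(s))} · (w∞(x(z))/τ(x(z))) dz for which the solution q(t) = e^{−∫_{t0}^{t} ds/τ(x(s))} q0 + ∫_{t0}^{t} e^{−∫_{z}^{t} ds/τ(x(s))} (w∞(x(z))/τ(x(z))) dz is T-periodic, and every other solution converges to this periodic solution as t → ∞. -/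

import Mathlib

open Real Filter intervalIntegral MeasureTheory

/-- Elimination of the recovery variable: for `q' = −q/τ(x(t)) + wInf(x(t))/τ(x(t))`
with `τ > 0` continuous, `wInf` continuous, and `x` continuous `T`-periodic, every
solution satisfies the closed-form variation-of-constants formula; the solution
is `T`-periodic iff its initial condition equals the explicit `q0`, and every
solution converges to the periodic one as `t → ∞`. -/
theorem stmt_9
    (τ wInf : ℝ → ℝ) (x : ℝ → ℝ) (t0 T : ℝ) (hT : 0 < T)
    (hτ : Continuous τ) (hτpos : ∀ s, 0 < τ s)
    (hw : Continuous wInf) (hx : Continuous x)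
    (hxper : ∀ t, x (t + T) = x t) :
    let q0 : ℝ := (1 - Real.exp (-∫ t in t0..(t0 + T), 1 / τ (x t)))⁻¹ *
      ∫ z in t0..(t0 + T),
        Real.exp (-∫ s in z..(t0 + T), 1 / τ (x s)) * (wInf (x z) / τ (x z))
    -- closed-form solution formula
    (∀ q : ℝ → ℝ, (∀ t, HasDerivAt q (-q t / τ (x t) + wInf (x t) / τ (x t)) t) →
      ∀ t, t0 ≤ t →
        q t = Real.exp (-∫ s in t0..t, 1 / τ (x s)) * q t0 +
          ∫ z in t0..t,
            Real.exp (-∫ s in z..t, 1 / τ (x s)) * (wInf (x z) / τ (x z))) ∧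
    -- q0 is the unique initial condition yielding a T-periodic solution
    (∀ q : ℝ → ℝ, (∀ t, HasDerivAt q (-q t / τ (x t) + wInf (x t) / τ (x t)) t) →
      ((∀ t, t0 ≤ t → q (t + T) = q t) ↔ q t0 = q0)) ∧
    -- every solution converges to the periodic one
    (∀ q p : ℝ → ℝ,
      (∀ t, HasDerivAt q (-q t / τ (x t) + wInf (x t) / τ (x t)) t) →
      (∀ t, HasDerivAt p (-p t / τ (x t) + wInf (x t) / τ (x t)) t) →
      q t0 = q0 →
      Filter.Tendsto (fun t => p t - q t) Filter.atTop (nhds 0)) := by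
  intro q0
  have hτxne : ∀ t, τ (x t) ≠ 0 := fun t => (hτpos _).ne'
  set a : ℝ → ℝ := fun t => 1 / τ (x t) with ha_def
  set b : ℝ → ℝ := fun t => wInf (x t) / τ (x t) with hb_def
  have hτx : Continuous fun t => τ (x t) := hτ.comp hx
  have ha_cont : Continuous a := continuous_const.div hτx hτxne
  have hb_cont : Continuous b := (hw.comp hx).div hτx hτxne
  have ha_pos : ∀ t, 0 < a t := fun t => one_div_pos.mpr (hτpos _)
  set A : ℝ → ℝ := fun t => ∫ s in t0..t, a s with hA_def
  have hA_deriv : ∀ t, HasDerivAt A (a t) t := fun t =>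
    (ha_cont.integral_hasStrictDerivAt t0 t).hasDerivAt
  have hA_cont : Continuous A := by
    have : Differentiable ℝ A := fun t => (hA_deriv t).differentiableAt
    exact this.continuous
  have hA0 : A t0 = 0 := intervalIntegral.integral_same
  have hAsub : ∀ z t : ℝ, (∫ s in z..t, a s) = A t - A z := by
    intro z t
    rw [hA_def]
    exact (intervalIntegral.integral_interval_sub_left
      (ha_cont.intervalIntegrable _ _) (ha_cont.intervalIntegrable _ _)).symm
  -- homogeneous equation: d' = -(a t) * d t ⟹ d t = d t0 * exp (-A t)
  have hhom : ∀ d : ℝ → ℝ, (∀ t, HasDerivAt d (-(a t) * d t) t) →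
      ∀ t, d t = d t0 * Real.exp (-(A t)) := by
    intro d hd t
    have hg : ∀ s, HasDerivAt (fun u => d u * Real.exp (A u)) 0 s := by
      intro s
      have := (hd s).mul ((hA_deriv s).exp)
      exact this.congr_deriv (by ring)
    have hconst := is_const_of_deriv_eq_zero (𝕜 := ℝ)
      (fun s => (hg s).differentiableAt) (fun s => (hg s).deriv) t t0
    have h0 : d t * Real.exp (A t) = d t0 := by simpa [hA0] using hconst
    have hne : Real.exp (A t) ≠ 0 := (Real.exp_pos _).ne'
    rw [Real.exp_neg]
    field_simp
    linarith [h0]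
  -- solutions: reformulate derivative
  have hsol : ∀ q : ℝ → ℝ,
      (∀ t, HasDerivAt q (-q t / τ (x t) + wInf (x t) / τ (x t)) t) →
      ∀ t, HasDerivAt q (-(a t) * q t + b t) t := by
    intro q hq t
    convert hq t using 1
    simp only [ha_def, hb_def]
    ring
  -- variation of constants
  have hform : ∀ q : ℝ → ℝ,
      (∀ t, HasDerivAt q (-(a t) * q t + b t) t) → ∀ t : ℝ,
      q t = Real.exp (-(A t)) * q t0 +
        ∫ z in t0..t, Real.exp (A z - A t) * b z := by
    intro q hq t
    have hint_cont : Continuous fun z => Real.exp (A z) * b z :=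
      (hA_cont.rexp).mul hb_cont
    have hg : ∀ s, HasDerivAt
        (fun u => q u * Real.exp (A u) - ∫ z in t0..u, Real.exp (A z) * b z) 0 s := by
      intro s
      have h1 := (hq s).mul ((hA_deriv s).exp)
      have h2 := (hint_cont.integral_hasStrictDerivAt t0 s).hasDerivAt
      have := h1.sub h2
      exact this.congr_deriv (by ring)
    have hconst := is_const_of_deriv_eq_zero (𝕜 := ℝ)
      (fun s => (hg s).differentiableAt) (fun s => (hg s).deriv) t t0
    simp only [hA0, Real.exp_zero, mul_one, intervalIntegral.integral_same, sub_zero]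
      at hconst
    have hne : Real.exp (A t) ≠ 0 := (Real.exp_pos _).ne'
    have key : q t * Real.exp (A t) = q t0 + ∫ z in t0..t, Real.exp (A z) * b z := by
      linarith [hconst]
    have h3 : q t = Real.exp (-(A t)) * (q t0 + ∫ z in t0..t, Real.exp (A z) * b z) := by
      rw [Real.exp_neg]
      field_simp
      linarith [key]
    rw [h3, mul_add]
    congr 1
    rw [← intervalIntegral.integral_const_mul]
    congr 1 with z
    rw [← mul_assoc, ← Real.exp_add]
    ring_nf
  -- part 1 restated with the integral forms from the statement
  have hform' : ∀ q : ℝ → ℝ,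
      (∀ t, HasDerivAt q (-q t / τ (x t) + wInf (x t) / τ (x t)) t) → ∀ t : ℝ,
      q t = Real.exp (-∫ s in t0..t, a s) * q t0 +
        ∫ z in t0..t, Real.exp (-∫ s in z..t, a s) * b z := by
    intro q hq t
    rw [hform q (hsol q hq) t]
    congr 1
    apply intervalIntegral.integral_congr
    intro z _
    simp only
    rw [hAsub z t, neg_sub]
  -- the one-period quantities
  have hIpos : 0 < ∫ s in t0..(t0 + T), a s :=
    intervalIntegral_pos_of_pos (ha_cont.intervalIntegrable _ _) ha_pos (by linarith)
  have hexp_lt : Real.exp (-∫ s in t0..(t0 + T), a s) < 1 := by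
    rw [Real.exp_lt_one_iff]
    linarith
  have hden_pos : 0 < 1 - Real.exp (-∫ s in t0..(t0 + T), a s) := by linarith
  -- difference of a solution and its time-T translate, or of two solutions,
  -- satisfies the homogeneous equation
  have hdiff : ∀ p q : ℝ → ℝ,
      (∀ t, HasDerivAt p (-(a t) * p t + b t) t) →
      (∀ t, HasDerivAt q (-(a t) * q t + b t) t) →
      ∀ t, (fun u => p u - q u) t = (p t0 - q t0) * Real.exp (-(A t)) := by
    intro p q hp hq
    apply hhom
    intro t
    have := (hp t).sub (hq t)
    exact this.congr_deriv (by ring)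
  -- translate of a solution is a solution
  have htrans : ∀ q : ℝ → ℝ,
      (∀ t, HasDerivAt q (-(a t) * q t + b t) t) →
      ∀ t, HasDerivAt (fun u => q (u + T)) (-(a t) * q (t + T) + b t) t := by
    intro q hq t
    have h1 : HasDerivAt (fun u : ℝ => u + T) 1 t := (hasDerivAt_id t).add_const T
    have := (hq (t + T)).comp t h1
    simp only [mul_one] at this
    exact this.congr_deriv (by simp only [ha_def, hb_def, hxper t])
  -- exp(-A t) → 0 as t → ∞
  have ha_per : Function.Periodic a T := by
    intro t; simp only [ha_def, hxper t]
  have hA_top : Tendsto A atTop atTop := by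
    have h0 : Tendsto (fun t => ∫ s in (0:ℝ)..t, a s) atTop atTop :=
      ha_per.tendsto_atTop_intervalIntegral_of_pos'
        (ha_cont.intervalIntegrable 0 T) ha_pos hT
    have heq : ∀ t, A t = (∫ s in (0:ℝ)..t, a s) - ∫ s in (0:ℝ)..t0, a s := by
      intro t
      rw [hA_def]
      exact (intervalIntegral.integral_interval_sub_left
        (ha_cont.intervalIntegrable _ _) (ha_cont.intervalIntegrable _ _)).symm
    rw [show A = fun t => (∫ s in (0:ℝ)..t, a s) - ∫ s in (0:ℝ)..t0, a s from funext heq]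
    exact h0.atTop_add tendsto_const_nhds
  have hexp_tendsto : Tendsto (fun t => Real.exp (-(A t))) atTop (nhds 0) :=
    Real.tendsto_exp_atBot.comp (tendsto_neg_atTop_atBot.comp hA_top)
  refine ⟨?_, ?_, ?_⟩
  · -- part 1
    intro q hq t _
    exact hform' q hq t
  · -- part 2
    intro q hq
    have hq' := hsol q hq
    have hqT := hform' q hq (t0 + T)
    set I : ℝ := ∫ s in t0..(t0 + T), a s with hI
    set J : ℝ := ∫ z in t0..(t0 + T), Real.exp (-∫ s in z..(t0 + T), a s) * b z with hJ
    have hq0eq : q0 = (1 - Real.exp (-I))⁻¹ * J := rfl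
    constructor
    · intro hper
      have h1 : q (t0 + T) = q t0 := hper t0 le_rfl
      rw [h1] at hqT
      rw [hq0eq]
      have : q t0 * (1 - Real.exp (-I)) = J := by linarith [hqT]
      field_simp
      linarith [this]
    · intro hq0
      have hfix : q (t0 + T) = q t0 := by
        rw [hqT, hq0, hq0eq]
        field_simp
        ring
      intro t _
      have hd := hdiff (fun u => q (u + T)) q (htrans q hq') hq' t
      simp only at hd
      rw [hfix, sub_self, zero_mul] at hd
      linarith [hd]
  · -- part 3
    intro q p hq hp _
    have hd := hdiff p q (hsol p hp) (hsol q hq)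
    have : Tendsto (fun t => (p t0 - q t0) * Real.exp (-(A t))) atTop (nhds 0) := by
      have := hexp_tendsto.const_mul (p t0 - q t0)
      simpa using this
    refine this.congr ?_
    intro t
    exact (hd t).symm
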